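/- (Theorem 2.4, fourth identity, q-case: joint moments of the negative q-trinomial distribution of the second kind.) Let n ≥ 1 be a natural number, β₁, β₂ ∈ (0,1) and m₁, m₂ ∈ ℕ. Then the double series over all pairs (v₁,v₂) ∈ ℕ × ℕ of [v₁]_{m₁,q} · [v₂]_{m₂,q} · ( ∏_{i=1}^{m₁} (1 − β₁·q^{n+v₂+i−1}) ) · v(v₁,v₂) converges, with sum equal to [n+m₁+m₂−1]_{m₁+m₂,q} · β₁^{m₁} · β₂^{m₂} / ∏_{i=1}^{m₁+m₂} (1 − β₂·q^{n+i−1}). -/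

import Mathlib

open Finset

/-- q-integer `[k]_q = (1 - q^k)/(1 - q)`. -/
noncomputable def qInt (q : ℝ) (k : ℤ) : ℝ := (1 - q ^ k) / (1 - q)

/-- q-factorial `[n]_q! = ∏_{i=1}^n [i]_q`. -/
noncomputable def qFact (q : ℝ) (n : ℕ) : ℝ := ∏ i ∈ Finset.Icc 1 n, qInt q (i : ℤ)

/-- q-binomial coefficient `C_q(n,k)`. -/
noncomputable def qBinom (q : ℝ) (n k : ℕ) : ℝ := qFact q n / (qFact q k * qFact q (n - k))

/-- q-falling factorial `[u]_{m,q} = ∏_{i=1}^m [u-i+1]_q`. -/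
noncomputable def qFall (q : ℝ) (u : ℤ) (m : ℕ) : ℝ := ∏ i ∈ Finset.Icc 1 m, qInt q (u - (i : ℤ) + 1)

/-- `[k]_{q⁻¹} = q^{1-k} · [k]_q`. -/
noncomputable def qIntInv (q : ℝ) (k : ℤ) : ℝ := q ^ (1 - k) * qInt q k

/-- `[u]_{m,q⁻¹} = ∏_{i=1}^m [u-i+1]_{q⁻¹}`. -/
noncomputable def qFallInv (q : ℝ) (u : ℤ) (m : ℕ) : ℝ := ∏ i ∈ Finset.Icc 1 m, qIntInv q (u - (i : ℤ) + 1)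

/-- `b(k) = k(k-1)/2`. -/
def bb (k : ℕ) : ℕ := k * (k - 1) / 2

/-- `⟨1 ⊕ α⟩_m = ∏_{i=1}^m (1 + α q^{i-1})`. -/
noncomputable def oplus (q α : ℝ) (m : ℕ) : ℝ := ∏ i ∈ Finset.Icc 1 m, (1 + α * q ^ (i - 1))

/-- `⟨1 ⊖ β⟩_m = ∏_{i=1}^m (1 - β q^{i-1})`. -/
noncomputable def ominus (q β : ℝ) (m : ℕ) : ℝ := ∏ i ∈ Finset.Icc 1 m, (1 - β * q ^ (i - 1))

/-- q-trinomial coefficient `T_q(n; x₁, x₂)`. -/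
noncomputable def qTri (q : ℝ) (n x1 x2 : ℕ) : ℝ :=
  qFact q n / (qFact q x1 * qFact q x2 * qFact q (n - x1 - x2))

/-- pmf of the negative q-trinomial distribution of the second kind. -/
noncomputable def vpmf (q b1 b2 : ℝ) (n v1 v2 : ℕ) : ℝ :=
  (qFact q (n + v1 + v2 - 1) / (qFact q v1 * qFact q v2 * qFact q (n - 1))) *
    b1 ^ v1 * b2 ^ v2 * ominus q b1 (n + v2) * ominus q b2 n

variable {q : ℝ}

lemma qInt_natCast_pos (hq0 : 0 < q) (hq1 : q < 1) {n : ℕ} (hn : 1 ≤ n) :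
    0 < qInt q (n : ℤ) := by
  have h1 : q ^ (n : ℤ) = q ^ n := zpow_natCast q n
  have : q ^ n < 1 := pow_lt_one₀ hq0.le hq1 (by omega)
  rw [qInt, h1]
  exact div_pos (by linarith) (by linarith)

lemma qInt_zero : qInt q 0 = 0 := by simp [qInt]

lemma qFact_pos (hq0 : 0 < q) (hq1 : q < 1) (n : ℕ) : 0 < qFact q n := by
  apply Finset.prod_pos
  intro i hi
  exact qInt_natCast_pos hq0 hq1 (mem_Icc.mp hi).1

lemma qFact_ne (hq0 : 0 < q) (hq1 : q < 1) (n : ℕ) : qFact q n ≠ 0 :=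
  (qFact_pos hq0 hq1 n).ne'

lemma qFact_succ (n : ℕ) : qFact q (n + 1) = qFact q n * qInt q ((n : ℤ) + 1) := by
  rw [qFact, qFact, Finset.prod_Icc_succ_top (by omega)]
  push_cast
  ring

lemma qInt_add (hq0 : 0 < q) (a b : ℤ) : qInt q (a + b) = qInt q a + q ^ a * qInt q b := by
  have hq : q ≠ 0 := hq0.ne'
  rw [qInt, qInt, qInt, zpow_add₀ hq]
  ring

/-- coefficient of the negative q-binomial series with `N = M + 1`. -/
noncomputable def nb (q : ℝ) (M w : ℕ) : ℝ := qFact q (M + w) / (qFact q w * qFact q M)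

lemma nb_zero (M : ℕ) : nb q M 0 = 1 / qFact q 0 * (qFact q M / qFact q M) := by
  simp [nb]; ring

lemma qFact_zero : qFact q 0 = 1 := by simp [qFact]

lemma nb_pascal (hq0 : 0 < q) (hq1 : q < 1) (M w : ℕ) :
    nb q (M + 1) (w + 1) = nb q M (w + 1) + q ^ (M + 1) * nb q (M + 1) w := by
  have key : qInt q ((M : ℤ) + (w : ℤ) + 2) =
      qInt q ((M : ℤ) + 1) + q ^ (M + 1) * qInt q ((w : ℤ) + 1) := by
    have := qInt_add hq0 ((M : ℤ) + 1) ((w : ℤ) + 1)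
    rw [show ((M : ℤ) + 1) + ((w : ℤ) + 1) = (M : ℤ) + (w : ℤ) + 2 by ring] at this
    rw [this, show ((M : ℤ) + 1) = ((M + 1 : ℕ) : ℤ) by push_cast; ring, zpow_natCast]
  have e1 : qFact q (M + 1 + (w + 1)) = qFact q (M + 1 + w) * qInt q ((M : ℤ) + (w : ℤ) + 2) := by
    rw [show M + 1 + (w + 1) = (M + 1 + w) + 1 by ring, qFact_succ]
    push_cast; ring_nf
  have e2 : qFact q (w + 1) = qFact q w * qInt q ((w : ℤ) + 1) := qFact_succ w
  have e3 : qFact q (M + 1) = qFact q M * qInt q ((M : ℤ) + 1) := qFact_succ M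
  have e4 : qFact q (M + (w + 1)) = qFact q (M + 1 + w) := by ring_nf
  have hIw : qInt q ((w : ℤ) + 1) ≠ 0 := by
    have := qInt_natCast_pos hq0 hq1 (n := w + 1) (by omega); push_cast at this ⊢; linarith
  have hIM : qInt q ((M : ℤ) + 1) ≠ 0 := by
    have := qInt_natCast_pos hq0 hq1 (n := M + 1) (by omega); push_cast at this ⊢; linarith
  have hFw := qFact_ne hq0 hq1 w
  have hFM := qFact_ne hq0 hq1 M
  have hF1 := qFact_ne hq0 hq1 (M + 1 + w)
  rw [nb, nb, nb, e1, e2, e3, e4, key]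
  field_simp

lemma ominus_eq_range (t : ℝ) (N : ℕ) : ominus q t N = ∏ i ∈ Finset.range N, (1 - t * q ^ i) := by
  induction N with
  | zero => simp [ominus]
  | succ n ih =>
    rw [ominus, Finset.prod_Icc_succ_top (by omega), ← ominus, ih, Finset.prod_range_succ]
    simp

lemma ominus_pos (hq0 : 0 < q) (hq1 : q < 1) {t : ℝ} (ht0 : 0 ≤ t) (ht1 : t < 1) (N : ℕ) :
    0 < ominus q t N := by
  rw [ominus_eq_range]
  apply Finset.prod_pos
  intro i _
  have h1 : q ^ i ≤ 1 := pow_le_one₀ hq0.le hq1.le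
  have h2 : t * q ^ i < 1 := by
    rcases eq_or_lt_of_le ht0 with h | h
    · rw [← h]; simpa using one_pos
    · calc t * q ^ i ≤ t * 1 := by nlinarith [pow_pos hq0 i]
        _ < 1 := by linarith
  linarith

lemma nb_zero_eq (hq0 : 0 < q) (hq1 : q < 1) (M : ℕ) : nb q M 0 = 1 := by
  simp [nb, qFact_zero, div_self (qFact_ne hq0 hq1 M)]

lemma nb_conv (hq0 : 0 < q) (hq1 : q < 1) (M : ℕ) (t : ℝ) (w : ℕ) :
    ∑ k ∈ Finset.range (w + 1), (q ^ (M + 1) * t) ^ k * (nb q M (w - k) * t ^ (w - k))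
      = nb q (M + 1) w * t ^ w := by
  induction w with
  | zero => simp [nb_zero_eq hq0 hq1]
  | succ w ih =>
    rw [Finset.sum_range_succ']
    have h1 : ∀ k ∈ Finset.range (w + 1),
        (q ^ (M + 1) * t) ^ (k + 1) * (nb q M (w + 1 - (k + 1)) * t ^ (w + 1 - (k + 1)))
        = (q ^ (M + 1) * t) * ((q ^ (M + 1) * t) ^ k * (nb q M (w - k) * t ^ (w - k))) := by
      intro k _
      have : w + 1 - (k + 1) = w - k := by omega
      rw [this, pow_succ]
      ring
    rw [Finset.sum_congr rfl h1, ← Finset.mul_sum, ih]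
    simp only [pow_zero, one_mul, Nat.sub_zero]
    rw [nb_pascal hq0 hq1 M w]
    ring

lemma nb_nonneg (hq0 : 0 < q) (hq1 : q < 1) (M w : ℕ) {t : ℝ} (ht : 0 ≤ t) :
    0 ≤ nb q M w * t ^ w := by
  have := qFact_pos hq0 hq1 (M + w)
  have := qFact_pos hq0 hq1 w
  have := qFact_pos hq0 hq1 M
  have : 0 ≤ nb q M w := le_of_lt (by rw [nb]; positivity)
  positivity

lemma nb_hasSum (hq0 : 0 < q) (hq1 : q < 1) (M : ℕ) {t : ℝ} (ht0 : 0 ≤ t) (ht1 : t < 1) :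
    HasSum (fun w => nb q M w * t ^ w) (ominus q t (M + 1))⁻¹ := by
  induction M with
  | zero =>
    have h : ∀ w : ℕ, nb q 0 w * t ^ w = t ^ w := by
      intro w
      simp [nb, qFact_zero, div_self (qFact_ne hq0 hq1 w)]
    have hgeo := hasSum_geometric_of_lt_one ht0 ht1
    have hom : ominus q t (0 + 1) = 1 - t := by
      rw [ominus_eq_range]; simp
    rw [hom]
    exact hgeo.congr_fun fun w => h w
  | succ M ih =>
    set a : ℕ → ℝ := fun k => (q ^ (M + 1) * t) ^ k with ha_def
    set b : ℕ → ℝ := fun w => nb q M w * t ^ w with hb_def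
    have hqt0 : 0 ≤ q ^ (M + 1) * t := by positivity
    have hqt1 : q ^ (M + 1) * t < 1 := by
      have h1 : q ^ (M + 1) < 1 := pow_lt_one₀ hq0.le hq1 (by omega)
      nlinarith [pow_pos hq0 (M + 1)]
    have ha : HasSum a (1 - q ^ (M + 1) * t)⁻¹ := hasSum_geometric_of_lt_one hqt0 hqt1
    have han : Summable fun k => ‖a k‖ := by
      have : ∀ k, ‖a k‖ = a k := fun k => Real.norm_of_nonneg (by positivity)
      exact ha.summable.congr fun k => (this k).symm
    have hbn : Summable fun w => ‖b w‖ := by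
      have : ∀ w, ‖b w‖ = b w := fun w => Real.norm_of_nonneg (nb_nonneg hq0 hq1 M w ht0)
      exact ih.summable.congr fun w => (this w).symm
    have hcauchy := hasSum_sum_range_mul_of_summable_norm han hbn
    rw [ha.tsum_eq, ih.tsum_eq] at hcauchy
    have heq : ∀ w, ∑ k ∈ Finset.range (w + 1), a k * b (w - k) = nb q (M + 1) w * t ^ w :=
      nb_conv hq0 hq1 M t
    have hval : (1 - q ^ (M + 1) * t)⁻¹ * (ominus q t (M + 1))⁻¹
        = (ominus q t (M + 1 + 1))⁻¹ := by
      have hp : (∏ i ∈ Finset.range (M + 1 + 1), (1 - t * q ^ i))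
          = (∏ i ∈ Finset.range (M + 1), (1 - t * q ^ i)) * (1 - t * q ^ (M + 1)) :=
        Finset.prod_range_succ _ _
      rw [ominus_eq_range, ominus_eq_range, hp, mul_inv]
      ring
    rw [hval] at hcauchy
    exact hcauchy.congr_fun fun w => (heq w).symm

lemma qFall_shift (hq0 : 0 < q) (hq1 : q < 1) (m : ℕ) :
    ∀ w : ℕ, qFall q ((w : ℤ) + (m : ℤ)) m = qFact q (w + m) / qFact q w := by
  induction m with
  | zero => intro w; simp [qFall, div_self (qFact_ne hq0 hq1 w)]
  | succ m ih =>
    intro w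
    have h1 : qFall q ((w : ℤ) + ((m : ℤ) + 1)) (m + 1)
        = qFall q (((w + 1 : ℕ) : ℤ) + (m : ℤ)) m * qInt q ((w : ℤ) + 1) := by
      rw [qFall, Finset.prod_Icc_succ_top (by omega : 1 ≤ m + 1), ← qFall]
      push_cast
      ring_nf
    push_cast at h1 ⊢
    have ihw := ih (w + 1)
    push_cast at ihw
    rw [h1, ihw]
    have e2 : qFact q (w + 1) = qFact q w * qInt q ((w : ℤ) + 1) := qFact_succ w
    have e3 : qFact q (w + 1 + m) = qFact q (w + (m + 1)) := by ring_nf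
    have hIw : qInt q ((w : ℤ) + 1) ≠ 0 := by
      have := qInt_natCast_pos hq0 hq1 (n := w + 1) (by omega); push_cast at this ⊢; linarith
    rw [e2, e3]
    field_simp [qFact_ne hq0 hq1]

lemma qFall_eq_div (hq0 : 0 < q) (hq1 : q < 1) {v m : ℕ} (h : m ≤ v) :
    qFall q (v : ℤ) m = qFact q v / qFact q (v - m) := by
  have h1 : (v : ℤ) = ((v - m : ℕ) : ℤ) + (m : ℤ) := by push_cast [Nat.cast_sub h]; ring
  rw [h1, qFall_shift hq0 hq1 m (v - m)]
  congr 2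
  omega

lemma qFall_zero_of_lt {v m : ℕ} (h : v < m) : qFall q (v : ℤ) m = 0 := by
  rw [qFall]
  apply Finset.prod_eq_zero (i := v + 1) (by simp [Finset.mem_Icc]; omega)
  have : (v : ℤ) - ((v + 1 : ℕ) : ℤ) + 1 = 0 := by push_cast; ring
  rw [this, qInt_zero]

lemma qFall_nonneg (hq0 : 0 < q) (hq1 : q < 1) (v m : ℕ) : 0 ≤ qFall q (v : ℤ) m := by
  rcases lt_or_ge v m with h | h
  · rw [qFall_zero_of_lt h]
  · rw [qFall_eq_div hq0 hq1 h]
    have := qFact_pos hq0 hq1 v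
    have := qFact_pos hq0 hq1 (v - m)
    positivity

lemma ominus_split (β : ℝ) (N m : ℕ) :
    ominus q β (N + m) = ominus q β N * ∏ i ∈ Finset.Icc 1 m, (1 - β * q ^ (N + i - 1)) := by
  induction m with
  | zero => simp
  | succ m ih =>
    rw [show N + (m + 1) = (N + m) + 1 by ring, ominus, Finset.prod_Icc_succ_top (by omega),
      ← ominus, ih, Finset.prod_Icc_succ_top (by omega : 1 ≤ m + 1)]
    have : N + m + 1 - 1 = N + (m + 1) - 1 := by omega
    rw [this]
    ring

lemma prod_one_sub_pos (hq0 : 0 < q) (hq1 : q < 1) {β : ℝ} (hβ0 : 0 < β) (hβ1 : β < 1)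
    (N m : ℕ) : 0 < ∏ i ∈ Finset.Icc 1 m, (1 - β * q ^ (N + i - 1)) := by
  apply Finset.prod_pos
  intro i _
  have h1 : q ^ (N + i - 1) ≤ 1 := pow_le_one₀ hq0.le hq1.le
  nlinarith [pow_pos hq0 (N + i - 1)]

lemma row_hasSum (hq0 : 0 < q) (hq1 : q < 1) (n : ℕ) (hn : 1 ≤ n) (β1 β2 : ℝ)
    (hβ1 : 0 < β1) (hβ1' : β1 < 1) (hβ2 : 0 < β2) (hβ2' : β2 < 1) (m1 m2 v2 : ℕ) :
    HasSum (fun v1 : ℕ =>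
        qFall q (v1 : ℤ) m1 * qFall q (v2 : ℤ) m2
          * (∏ i ∈ Finset.Icc 1 m1, (1 - β1 * q ^ (n + v2 + i - 1)))
          * vpmf q β1 β2 n v1 v2)
      (qFact q (n + v2 + m1 - 1) * qFall q (v2 : ℤ) m2 * β2 ^ v2 * ominus q β2 n * β1 ^ m1
        / (qFact q v2 * qFact q (n - 1))) := by
  set M := n + v2 + m1 - 1 with hM
  set P : ℝ := ∏ i ∈ Finset.Icc 1 m1, (1 - β1 * q ^ (n + v2 + i - 1)) with hP
  set term : ℕ → ℝ := fun v1 =>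
    qFall q (v1 : ℤ) m1 * qFall q (v2 : ℤ) m2 * P * vpmf q β1 β2 n v1 v2 with hterm_def
  set K : ℝ := qFall q (v2 : ℤ) m2 * P * β2 ^ v2 * ominus q β1 (n + v2) * ominus q β2 n
      * β1 ^ m1 * qFact q M / (qFact q v2 * qFact q (n - 1)) with hK
  have h1 := (nb_hasSum hq0 hq1 M hβ1.le hβ1').mul_left K
  have hsplit : ominus q β1 (M + 1) = ominus q β1 (n + v2) * P := by
    rw [show M + 1 = (n + v2) + m1 by omega, ominus_split]
  have hterm : ∀ w : ℕ, K * (nb q M w * β1 ^ w) = term (w + m1) := by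
    intro w
    have hfall : qFall q ((w + m1 : ℕ) : ℤ) m1 = qFact q (w + m1) / qFact q w := by
      rw [qFall_eq_div hq0 hq1 (by omega)]
      congr 2
      omega
    have hidx : n + (w + m1) + v2 - 1 = M + w := by omega
    have hpow : β1 ^ (w + m1) = β1 ^ w * β1 ^ m1 := pow_add β1 w m1
    simp only [hterm_def, vpmf, hfall, hidx, hpow, hK, nb]
    have h1 := qFact_ne hq0 hq1 w
    have h2 := qFact_ne hq0 hq1 (w + m1)
    have h3 := qFact_ne hq0 hq1 M
    have h4 := qFact_ne hq0 hq1 v2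
    have h5 := qFact_ne hq0 hq1 (n - 1)
    field_simp
  have hval : K * (ominus q β1 (M + 1))⁻¹
      = qFact q (n + v2 + m1 - 1) * qFall q (v2 : ℤ) m2 * β2 ^ v2 * ominus q β2 n * β1 ^ m1
        / (qFact q v2 * qFact q (n - 1)) := by
    rw [hsplit, hK]
    have hom : ominus q β1 (n + v2) ≠ 0 := (ominus_pos hq0 hq1 hβ1.le hβ1' _).ne'
    have hPne : P ≠ 0 := (prod_one_sub_pos hq0 hq1 hβ1 hβ1' (n + v2) m1).ne'
    have h4 := qFact_ne hq0 hq1 v2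
    have h5 := qFact_ne hq0 hq1 (n - 1)
    rw [← hM]
    field_simp
  rw [hval] at h1
  have h2 : HasSum (fun w => term (w + m1))
      (qFact q (n + v2 + m1 - 1) * qFall q (v2 : ℤ) m2 * β2 ^ v2 * ominus q β2 n * β1 ^ m1
        / (qFact q v2 * qFact q (n - 1))) :=
    h1.congr_fun fun w => (hterm w).symm
  have h3 := (hasSum_nat_add_iff (f := term) m1).mp h2
  have hzero : ∑ i ∈ Finset.range m1, term i = 0 := by
    apply Finset.sum_eq_zero
    intro i hi
    have : qFall q (i : ℤ) m1 = 0 := qFall_zero_of_lt (Finset.mem_range.mp hi)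
    simp [hterm_def, this]
  rw [hzero, add_zero] at h3
  exact h3

lemma outer_hasSum (hq0 : 0 < q) (hq1 : q < 1) (n : ℕ) (hn : 1 ≤ n) (β1 β2 : ℝ)
    (hβ1 : 0 < β1) (hβ1' : β1 < 1) (hβ2 : 0 < β2) (hβ2' : β2 < 1) (m1 m2 : ℕ) :
    HasSum (fun v2 : ℕ =>
        qFact q (n + v2 + m1 - 1) * qFall q (v2 : ℤ) m2 * β2 ^ v2 * ominus q β2 n * β1 ^ m1
          / (qFact q v2 * qFact q (n - 1)))
      (qFall q ((n : ℤ) + (m1 : ℤ) + (m2 : ℤ) - 1) (m1 + m2) * β1 ^ m1 * β2 ^ m2 /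
        ∏ i ∈ Finset.Icc 1 (m1 + m2), (1 - β2 * q ^ (n + i - 1))) := by
  set M2 := n + m1 + m2 - 1 with hM2
  set g : ℕ → ℝ := fun v2 =>
    qFact q (n + v2 + m1 - 1) * qFall q (v2 : ℤ) m2 * β2 ^ v2 * ominus q β2 n * β1 ^ m1
      / (qFact q v2 * qFact q (n - 1)) with hg
  set K2 : ℝ := qFact q M2 * β2 ^ m2 * ominus q β2 n * β1 ^ m1 / qFact q (n - 1) with hK2
  have h1 := (nb_hasSum hq0 hq1 M2 hβ2.le hβ2').mul_left K2
  have hterm : ∀ w : ℕ, K2 * (nb q M2 w * β2 ^ w) = g (w + m2) := by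
    intro w
    have hfall : qFall q ((w + m2 : ℕ) : ℤ) m2 = qFact q (w + m2) / qFact q w := by
      rw [qFall_eq_div hq0 hq1 (by omega)]
      congr 2
      omega
    have hidx : n + (w + m2) + m1 - 1 = M2 + w := by omega
    have hpow : β2 ^ (w + m2) = β2 ^ w * β2 ^ m2 := pow_add β2 w m2
    simp only [hg, hfall, hidx, hpow, hK2, nb]
    have h1 := qFact_ne hq0 hq1 w
    have h2 := qFact_ne hq0 hq1 (w + m2)
    have h3 := qFact_ne hq0 hq1 M2
    have h5 := qFact_ne hq0 hq1 (n - 1)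
    field_simp
  have hval : K2 * (ominus q β2 (M2 + 1))⁻¹
      = qFall q ((n : ℤ) + (m1 : ℤ) + (m2 : ℤ) - 1) (m1 + m2) * β1 ^ m1 * β2 ^ m2 /
        ∏ i ∈ Finset.Icc 1 (m1 + m2), (1 - β2 * q ^ (n + i - 1)) := by
    have hfall2 : qFall q ((n : ℤ) + (m1 : ℤ) + (m2 : ℤ) - 1) (m1 + m2)
        = qFact q M2 / qFact q (n - 1) := by
      have hc : (n : ℤ) + (m1 : ℤ) + (m2 : ℤ) - 1
          = ((n - 1 : ℕ) : ℤ) + ((m1 + m2 : ℕ) : ℤ) := by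
        have : ((n - 1 : ℕ) : ℤ) = (n : ℤ) - 1 := by
          push_cast [Nat.cast_sub hn]; ring
        rw [this]; push_cast; ring
      rw [hc, qFall_shift hq0 hq1 (m1 + m2) (n - 1)]
      congr 2
      omega
    have hsplit : ominus q β2 (M2 + 1)
        = ominus q β2 n * ∏ i ∈ Finset.Icc 1 (m1 + m2), (1 - β2 * q ^ (n + i - 1)) := by
      rw [show M2 + 1 = n + (m1 + m2) by omega, ominus_split]
    rw [hfall2, hsplit, hK2]
    have hom : ominus q β2 n ≠ 0 := (ominus_pos hq0 hq1 hβ2.le hβ2' _).ne'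
    have hPne : (∏ i ∈ Finset.Icc 1 (m1 + m2), (1 - β2 * q ^ (n + i - 1))) ≠ 0 :=
      (prod_one_sub_pos hq0 hq1 hβ2 hβ2' n (m1 + m2)).ne'
    have h3 := qFact_ne hq0 hq1 M2
    have h5 := qFact_ne hq0 hq1 (n - 1)
    field_simp
  rw [hval] at h1
  have h2 := h1.congr_fun fun w => (hterm w).symm
  have h3 := (hasSum_nat_add_iff (f := g) m2).mp h2
  have hzero : ∑ i ∈ Finset.range m2, g i = 0 := by
    apply Finset.sum_eq_zero
    intro i hi
    have : qFall q (i : ℤ) m2 = 0 := qFall_zero_of_lt (Finset.mem_range.mp hi)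
    simp [hg, this]
  rw [hzero, add_zero] at h3
  exact h3

lemma vpmf_nonneg (hq0 : 0 < q) (hq1 : q < 1) (n : ℕ) {β1 β2 : ℝ}
    (hβ1 : 0 < β1) (hβ1' : β1 < 1) (hβ2 : 0 < β2) (hβ2' : β2 < 1) (v1 v2 : ℕ) :
    0 ≤ vpmf q β1 β2 n v1 v2 := by
  rw [vpmf]
  have a1 := qFact_pos hq0 hq1 (n + v1 + v2 - 1)
  have a2 := qFact_pos hq0 hq1 v1
  have a3 := qFact_pos hq0 hq1 v2
  have a4 := qFact_pos hq0 hq1 (n - 1)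
  have a5 := ominus_pos hq0 hq1 hβ1.le hβ1' (n + v2)
  have a6 := ominus_pos hq0 hq1 hβ2.le hβ2' n
  positivity

theorem stmt18 (q : ℝ) (hq0 : 0 < q) (hq1 : q < 1) (n : ℕ) (hn : 1 ≤ n) (β1 β2 : ℝ)
    (hβ1 : 0 < β1) (hβ1' : β1 < 1) (hβ2 : 0 < β2) (hβ2' : β2 < 1) (m1 m2 : ℕ) :
    HasSum (fun v : ℕ × ℕ =>
        qFall q (v.1 : ℤ) m1 * qFall q (v.2 : ℤ) m2
          * (∏ i ∈ Finset.Icc 1 m1, (1 - β1 * q ^ (n + v.2 + i - 1)))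
          * vpmf q β1 β2 n v.1 v.2)
      (qFall q ((n : ℤ) + (m1 : ℤ) + (m2 : ℤ) - 1) (m1 + m2) * β1 ^ m1 * β2 ^ m2 /
        ∏ i ∈ Finset.Icc 1 (m1 + m2), (1 - β2 * q ^ (n + i - 1))) := by
  set F : ℕ × ℕ → ℝ := fun v =>
    qFall q (v.1 : ℤ) m1 * qFall q (v.2 : ℤ) m2
      * (∏ i ∈ Finset.Icc 1 m1, (1 - β1 * q ^ (n + v.2 + i - 1)))
      * vpmf q β1 β2 n v.1 v.2 with hF
  set T : ℝ := qFall q ((n : ℤ) + (m1 : ℤ) + (m2 : ℤ) - 1) (m1 + m2) * β1 ^ m1 * β2 ^ m2 /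
      ∏ i ∈ Finset.Icc 1 (m1 + m2), (1 - β2 * q ^ (n + i - 1)) with hT
  set g : ℕ → ℝ := fun v2 =>
    qFact q (n + v2 + m1 - 1) * qFall q (v2 : ℤ) m2 * β2 ^ v2 * ominus q β2 n * β1 ^ m1
      / (qFact q v2 * qFact q (n - 1)) with hg
  have hrow : ∀ v2 : ℕ, HasSum (fun v1 => F (v1, v2)) (g v2) := fun v2 =>
    row_hasSum hq0 hq1 n hn β1 β2 hβ1 hβ1' hβ2 hβ2' m1 m2 v2
  have houter : HasSum g T :=
    outer_hasSum hq0 hq1 n hn β1 β2 hβ1 hβ1' hβ2 hβ2' m1 m2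
  set F' : ℕ × ℕ → ℝ := fun p => F (p.2, p.1) with hF'
  have hnn : 0 ≤ F' := by
    intro p
    have b1 := qFall_nonneg hq0 hq1 p.2 m1
    have b2 := qFall_nonneg hq0 hq1 p.1 m2
    have b3 := (prod_one_sub_pos hq0 hq1 hβ1 hβ1' (n + p.1) m1).le
    have b4 := vpmf_nonneg hq0 hq1 n hβ1 hβ1' hβ2 hβ2' p.2 p.1
    simp only [hF', hF, Pi.zero_apply]
    exact mul_nonneg (mul_nonneg (mul_nonneg b1 b2) b3) b4
  have hsumm : Summable F' := by
    rw [summable_prod_of_nonneg hnn]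
    constructor
    · exact fun v2 => (hrow v2).summable
    · apply houter.summable.congr
      intro v2
      exact ((hrow v2).tsum_eq).symm
  have htsum : ∑' p, F' p = T := by
    rw [Summable.tsum_prod' hsumm fun v2 => (hrow v2).summable]
    calc (∑' v2, ∑' v1, F' (v2, v1)) = ∑' v2, g v2 := by
          apply tsum_congr
          intro v2
          exact (hrow v2).tsum_eq
      _ = T := houter.tsum_eq
  have hF'sum : HasSum F' T := htsum ▸ hsumm.hasSum
  exact (Equiv.prodComm ℕ ℕ).hasSum_iff.mp hF'sum
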